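/- arXiv:2401.07091 — 2 statements merged into one kernel-verified Lean document; each statement's English description precedes it below -/
import Mathlib

section
/- The k-clustering C_SL produced by the single-linkage algorithm on (X, dist) maximizes the MST spacing: for every k-clustering C of X, MST-Sp(C_SL) ≥ MST-Sp(C). -/
open scoped Classical

namespace ClusterSpacing

variable {X : Type*}

/-- The spacing between two groups: the minimum (infimum) distance between a
point of `A` and a point of `B`. -/
noncomputable def spacing (dist : X → X → ℝ) (A B : Set X) : ℝ :=
  sInf {d : ℝ | ∃ x ∈ A, ∃ y ∈ B, d = dist x y}

/-- The weight of an (unordered) edge between two groups. For symmetric `dist`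
this coincides with `spacing`. -/
noncomputable def edgeWeight (dist : X → X → ℝ) : Sym2 (Set X) → ℝ :=
  Sym2.lift ⟨fun A B =>
    sInf ({d : ℝ | ∃ x ∈ A, ∃ y ∈ B, d = dist x y} ∪
          {d : ℝ | ∃ x ∈ B, ∃ y ∈ A, d = dist x y}),
    fun A B => by beta_reduce; rw [Set.union_comm]⟩

/-- A clustering of `X`: a partition of `X` into nonempty groups. -/
def IsClustering (𝒞 : Set (Set X)) : Prop :=
  (∀ A ∈ 𝒞, A.Nonempty) ∧ ⋃₀ 𝒞 = Set.univ ∧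
    ∀ A ∈ 𝒞, ∀ B ∈ 𝒞, A ≠ B → Disjoint A B

/-- The minimum spacing of a clustering: the minimum spacing over pairs of
distinct groups. -/
noncomputable def MinSp (dist : X → X → ℝ) (𝒞 : Set (Set X)) : ℝ :=
  sInf {d : ℝ | ∃ A ∈ 𝒞, ∃ B ∈ 𝒞, A ≠ B ∧ d = spacing dist A B}

/-- Total weight of (the edges of) a graph on the groups of a clustering. -/
noncomputable def treeCost (dist : X → X → ℝ) (𝒞 : Set (Set X))
    (T : SimpleGraph {A : Set X // A ∈ 𝒞}) : ℝ :=
  ∑ᶠ e ∈ T.edgeSet, edgeWeight dist (Sym2.map Subtype.val e)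

/-- The MST spacing of a clustering: the minimum, over all spanning trees of the
complete graph on the groups, of the total edge weight. -/
noncomputable def MSTSp (dist : X → X → ℝ) (𝒞 : Set (Set X)) : ℝ :=
  sInf {c : ℝ | ∃ T : SimpleGraph {A : Set X // A ∈ 𝒞}, T.IsTree ∧ treeCost dist 𝒞 T = c}

/-- `T` is a minimum spanning tree of the complete graph `G_𝒞` on the groups of `𝒞`. -/
def IsMST (dist : X → X → ℝ) (𝒞 : Set (Set X))
    (T : SimpleGraph {A : Set X // A ∈ 𝒞}) : Prop :=
  T.IsTree ∧ ∀ T' : SimpleGraph {A : Set X // A ∈ 𝒞}, T'.IsTree →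
    treeCost dist 𝒞 T ≤ treeCost dist 𝒞 T'

/-- `SingleLinkage dist t 𝒟` holds iff `𝒟` is the collection of groups present
after `t` merging steps of the single-linkage algorithm. -/
inductive SingleLinkage (dist : X → X → ℝ) : ℕ → Set (Set X) → Prop
  | zero : SingleLinkage dist 0 {A : Set X | ∃ x : X, A = {x}}
  | succ (t : ℕ) (𝒟 : Set (Set X)) (A B : Set X) :
      SingleLinkage dist t 𝒟 → A ∈ 𝒟 → B ∈ 𝒟 → A ≠ B →
      (∀ A' ∈ 𝒟, ∀ B' ∈ 𝒟, A' ≠ B' → spacing dist A B ≤ spacing dist A' B') →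
      SingleLinkage dist (t + 1) (insert (A ∪ B) (𝒟 \ {A, B}))

/-- The list of edge weights of a graph on the groups of a clustering, sorted
in nondecreasing order. -/
noncomputable def edgeWeightsSorted [Fintype X] (dist : X → X → ℝ) (𝒞 : Set (Set X))
    (T : SimpleGraph {A : Set X // A ∈ 𝒞}) : List ℝ :=
  Multiset.sort
    ((T.edgeSet.toFinite.toFinset.val).map (fun e => edgeWeight dist (Sym2.map Subtype.val e)))
    (· ≤ ·)


section Aux

open SimpleGraph

variable {X : Type*}

lemma part_unique {𝒟 : Set (Set X)}
    (hdisj : ∀ A ∈ 𝒟, ∀ B ∈ 𝒟, A ≠ B → Disjoint A B)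
    {A B : Set X} {x : X} (hA : A ∈ 𝒟) (hB : B ∈ 𝒟) (hxA : x ∈ A) (hxB : x ∈ B) :
    A = B := by
  by_contra h
  exact Set.disjoint_left.mp (hdisj A hA B hB h) hxA hxB

lemma spacing_le [Finite X] (dist : X → X → ℝ) {A B : Set X} {x y : X}
    (hx : x ∈ A) (hy : y ∈ B) : spacing dist A B ≤ dist x y := by
  have hfin : {d : ℝ | ∃ x ∈ A, ∃ y ∈ B, d = dist x y}.Finite := by
    apply (Set.finite_range (fun p : X × X => dist p.1 p.2)).subset
    rintro d ⟨x, hx, y, hy, rfl⟩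
    exact ⟨(x, y), rfl⟩
  exact csInf_le hfin.bddBelow ⟨x, hx, y, hy, rfl⟩

lemma spacing_attained [Finite X] (dist : X → X → ℝ) {A B : Set X}
    (hA : A.Nonempty) (hB : B.Nonempty) :
    ∃ x ∈ A, ∃ y ∈ B, spacing dist A B = dist x y := by
  have hfin : {d : ℝ | ∃ x ∈ A, ∃ y ∈ B, d = dist x y}.Finite := by
    apply (Set.finite_range (fun p : X × X => dist p.1 p.2)).subset
    rintro d ⟨x, hx, y, hy, rfl⟩
    exact ⟨(x, y), rfl⟩
  have hne : {d : ℝ | ∃ x ∈ A, ∃ y ∈ B, d = dist x y}.Nonempty := by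
    obtain ⟨a, ha⟩ := hA; obtain ⟨b, hb⟩ := hB
    exact ⟨dist a b, a, ha, b, hb, rfl⟩
  exact hne.csInf_mem hfin

lemma edgeWeight_eq_spacing (dist : X → X → ℝ) (hsymm : ∀ x y : X, dist x y = dist y x)
    (A B : Set X) : edgeWeight dist s(A, B) = spacing dist A B := by
  have h : {d : ℝ | ∃ x ∈ B, ∃ y ∈ A, d = dist x y} = {d : ℝ | ∃ x ∈ A, ∃ y ∈ B, d = dist x y} := by
    ext d
    constructor
    · rintro ⟨x, hx, y, hy, rfl⟩; exact ⟨y, hy, x, hx, hsymm x y⟩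
    · rintro ⟨x, hx, y, hy, rfl⟩; exact ⟨y, hy, x, hx, hsymm x y⟩
  simp only [edgeWeight, Sym2.lift_mk, h, Set.union_self, spacing]

lemma edgeWeight_nonneg (dist : X → X → ℝ)
    (hpos : ∀ x y : X, x ≠ y → 0 < dist x y)
    {A B : Set X} (hd : Disjoint A B) : 0 ≤ edgeWeight dist s(A, B) := by
  simp only [edgeWeight, Sym2.lift_mk]
  apply Real.sInf_nonneg
  rintro d (⟨x, hx, y, hy, rfl⟩ | ⟨x, hx, y, hy, rfl⟩)
  · refine (hpos x y fun h => ?_).le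
    exact Set.disjoint_left.mp hd hx (h ▸ hy)
  · refine (hpos x y fun h => ?_).le
    exact Set.disjoint_left.mp hd (h ▸ hy) hx

lemma exists_adj_of_mem_edgeSet {V : Type*} {G : SimpleGraph V} {e : Sym2 V}
    (he : e ∈ G.edgeSet) : ∃ a b, G.Adj a b ∧ e = s(a, b) := by
  induction e using Sym2.ind with
  | _ a b => exact ⟨a, b, he, rfl⟩

lemma connected_sdiff_of_reachable {V : Type*} {G : SimpleGraph V} {v w : V}
    (h : G.Connected)
    (hr : (G \ SimpleGraph.fromEdgeSet {s(v, w)}).Reachable v w) :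
    (G \ SimpleGraph.fromEdgeSet {s(v, w)}).Connected := by
  rw [connected_iff]
  refine ⟨?_, (G.connected_iff.mp h).2⟩
  intro a b
  obtain ⟨p⟩ := h.preconnected a b
  induction p with
  | nil => exact Reachable.refl _
  | @cons x y z hadj q ih =>
    refine Reachable.trans ?_ ih
    by_cases he : s(x, y) = s(v, w)
    · rcases Sym2.eq_iff.mp he with ⟨rfl, rfl⟩ | ⟨rfl, rfl⟩
      · exact hr
      · exact hr.symm
    · refine Adj.reachable ?_
      rw [sdiff_adj]
      exact ⟨hadj, fun hc => he (by simpa using ((fromEdgeSet_adj _).mp hc).1)⟩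

lemma exists_spanning_tree_aux {V : Type*} [Finite V] :
    ∀ n (G : SimpleGraph V), G.edgeSet.ncard = n → G.Connected →
      ∃ T, T ≤ G ∧ T.IsTree := by
  intro n
  induction n using Nat.strong_induction_on with
  | _ n ih =>
    intro G hn hG
    by_cases hac : G.IsAcyclic
    · exact ⟨G, le_rfl, ⟨hG, hac⟩⟩
    · rw [isAcyclic_iff_forall_adj_isBridge] at hac
      push_neg at hac
      obtain ⟨v, w, hadj, hbr⟩ := hac
      rw [isBridge_iff] at hbr
      push_neg at hbr
      have hr : (G \ SimpleGraph.fromEdgeSet {s(v, w)}).Reachable v w := hbr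
      have hcon := connected_sdiff_of_reachable hG hr
      have hlt : (G \ SimpleGraph.fromEdgeSet {s(v, w)}).edgeSet.ncard < n := by
        rw [edgeSet_sdiff, edgeSet_fromEdgeSet, edgeSet_sdiff_sdiff_isDiag]
        subst hn
        exact Set.ncard_diff_singleton_lt_of_mem hadj (Set.toFinite _)
      obtain ⟨T, hT, hTt⟩ := ih _ hlt _ rfl hcon
      exact ⟨T, hT.trans sdiff_le, hTt⟩

lemma exists_spanning_tree {V : Type*} [Finite V] (G : SimpleGraph V) (hG : G.Connected) :
    ∃ T, T ≤ G ∧ T.IsTree :=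
  exists_spanning_tree_aux _ G rfl hG

/-- The simple graph on `X` generated by a finite set of pairs. -/
def pairGraph (E : Finset (X × X)) : SimpleGraph X :=
  SimpleGraph.fromEdgeSet ((fun p : X × X => s(p.1, p.2)) '' (E : Set (X × X)))

/-- The invariant maintained by the single-linkage algorithm. -/
structure SLInv [Fintype X] (dist : X → X → ℝ) (t : ℕ) (𝒟 : Set (Set X)) : Prop where
  nonempty : ∀ A ∈ 𝒟, A.Nonempty
  cover : ⋃₀ 𝒟 = Set.univ
  disj : ∀ A ∈ 𝒟, ∀ B ∈ 𝒟, A ≠ B → Disjoint A B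
  fin : 𝒟.Finite
  card : 𝒟.ncard + t = Fintype.card X
  edges : ∃ E : Finset (X × X),
    (∀ p ∈ E, p.1 ≠ p.2) ∧
    (∀ p ∈ E, ∀ x y : X, (∀ D ∈ 𝒟, ¬(x ∈ D ∧ y ∈ D)) → dist p.1 p.2 ≤ dist x y) ∧
    (∀ D ∈ 𝒟, ∀ x ∈ D, ∀ y ∈ D, (pairGraph E).Reachable x y)

lemma singleLinkage_inv [Fintype X] {dist : X → X → ℝ} :
    ∀ {t : ℕ} {𝒟 : Set (Set X)}, SingleLinkage dist t 𝒟 → SLInv dist t 𝒟 := by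
  intro t 𝒟 h
  induction h with
  | zero =>
    have hrange : {A : Set X | ∃ x : X, A = {x}} = Set.range (fun x : X => ({x} : Set X)) := by
      ext A; simp [eq_comm]
    constructor
    · rintro A ⟨x, rfl⟩; exact ⟨x, rfl⟩
    · ext x
      simp only [Set.mem_sUnion, Set.mem_univ, iff_true]
      exact ⟨{x}, ⟨x, rfl⟩, rfl⟩
    · rintro A ⟨x, rfl⟩ B ⟨y, rfl⟩ hne
      rw [Set.disjoint_singleton]
      intro h; exact hne (by rw [h])
    · rw [hrange]; exact Set.finite_range _
    · rw [hrange, Nat.add_zero, ← Nat.card_coe_set_eq, Nat.card_range_of_injective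
        (fun a b hab => by simpa using hab), Nat.card_eq_fintype_card]
    · refine ⟨∅, by simp, by simp, ?_⟩
      rintro D ⟨x, rfl⟩ a ha b hb
      simp only [Set.mem_singleton_iff] at ha hb
      subst ha; subst hb
      exact Reachable.refl _
  | succ t 𝒟 A B hSL hA hB hAB hmin ih =>
    have hAne : A.Nonempty := ih.nonempty A hA
    have hBne : B.Nonempty := ih.nonempty B hB
    have hunion_notmem : A ∪ B ∉ 𝒟 \ {A, B} := by
      rintro ⟨hmem, hne⟩
      simp only [Set.mem_insert_iff, Set.mem_singleton_iff, not_or] at hne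
      obtain ⟨a, ha⟩ := hAne
      exact Set.disjoint_left.mp (ih.disj _ hmem A hA hne.1) (Or.inl ha) ha
    have hmem' : ∀ D ∈ 𝒟, D ∈ insert (A ∪ B) (𝒟 \ {A, B}) ∨ D = A ∨ D = B := by
      intro D hD
      by_cases h1 : D = A
      · exact Or.inr (Or.inl h1)
      by_cases h2 : D = B
      · exact Or.inr (Or.inr h2)
      · exact Or.inl (Or.inr ⟨hD, by simp [h1, h2]⟩)
    have hnocommon : ∀ x y : X,
        (∀ D ∈ insert (A ∪ B) (𝒟 \ {A, B}), ¬(x ∈ D ∧ y ∈ D)) →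
        ∀ D ∈ 𝒟, ¬(x ∈ D ∧ y ∈ D) := by
      intro x y hxy D hD ⟨hx, hy⟩
      rcases hmem' D hD with h | h | h
      · exact hxy D h ⟨hx, hy⟩
      · exact hxy (A ∪ B) (Set.mem_insert _ _) ⟨Or.inl (h ▸ hx), Or.inl (h ▸ hy)⟩
      · exact hxy (A ∪ B) (Set.mem_insert _ _) ⟨Or.inr (h ▸ hx), Or.inr (h ▸ hy)⟩
    constructor
    · rintro D (rfl | ⟨hD, -⟩)
      · exact hAne.mono Set.subset_union_left
      · exact ih.nonempty D hD
    · apply Set.eq_univ_of_forall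
      intro x
      have hx : x ∈ ⋃₀ 𝒟 := by rw [ih.cover]; trivial
      obtain ⟨D, hD, hxD⟩ := hx
      rcases hmem' D hD with h | h | h
      · exact ⟨D, h, hxD⟩
      · exact ⟨A ∪ B, Set.mem_insert _ _, Or.inl (h ▸ hxD)⟩
      · exact ⟨A ∪ B, Set.mem_insert _ _, Or.inr (h ▸ hxD)⟩
    · have hunionD : ∀ D ∈ 𝒟 \ {A, B}, Disjoint (A ∪ B) D := by
        rintro D ⟨hD, hne⟩
        simp only [Set.mem_insert_iff, Set.mem_singleton_iff, not_or] at hne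
        exact Set.disjoint_union_left.mpr
          ⟨ih.disj A hA D hD (fun h => hne.1 h.symm), ih.disj B hB D hD (fun h => hne.2 h.symm)⟩
      rintro C (rfl | hC) D (rfl | hD) hne
      · exact absurd rfl hne
      · exact hunionD D hD
      · exact (hunionD C hC).symm
      · exact ih.disj C hC.1 D hD.1 hne
    · exact ((ih.fin.diff).insert _)
    · have h2le : 2 ≤ 𝒟.ncard := by
        calc 2 = ({A, B} : Set (Set X)).ncard := (Set.ncard_pair hAB).symm
        _ ≤ 𝒟.ncard := Set.ncard_le_ncard (by
            rintro C (rfl | rfl)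
            · exact hA
            · simpa using hB) ih.fin
      have hd : (𝒟 \ {A, B}).ncard = 𝒟.ncard - 2 := by
        rw [Set.ncard_diff (by
          rintro C (rfl | rfl)
          · exact hA
          · simpa using hB) (Set.finite_singleton _ |>.insert _), Set.ncard_pair hAB]
      rw [Set.ncard_insert_of_notMem hunion_notmem (ih.fin.diff), hd]
      have := ih.card
      omega
    · obtain ⟨E, hE1, hE2, hE3⟩ := ih.edges
      obtain ⟨a, ha, b, hb, hab⟩ := spacing_attained dist hAne hBne
      have hanb : a ≠ b := fun h =>
        Set.disjoint_left.mp (ih.disj A hA B hB hAB) ha (h ▸ hb)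
      refine ⟨insert (a, b) E, ?_, ?_, ?_⟩
      · rintro p hp
        rcases Finset.mem_insert.mp hp with rfl | hp
        · exact hanb
        · exact hE1 p hp
      · rintro p hp x y hxy
        have hnc := hnocommon x y hxy
        rcases Finset.mem_insert.mp hp with rfl | hp
        · have hx : x ∈ ⋃₀ 𝒟 := by rw [ih.cover]; trivial
          have hy : y ∈ ⋃₀ 𝒟 := by rw [ih.cover]; trivial
          obtain ⟨Cx, hCx, hxCx⟩ := hx
          obtain ⟨Cy, hCy, hyCy⟩ := hy
          have hCxy : Cx ≠ Cy := fun h => hnc Cx hCx ⟨hxCx, h ▸ hyCy⟩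
          calc dist a b = spacing dist A B := hab.symm
          _ ≤ spacing dist Cx Cy := hmin Cx hCx Cy hCy hCxy
          _ ≤ dist x y := spacing_le dist hxCx hyCy
        · exact hE2 p hp x y hnc
      · have hmono : pairGraph E ≤ pairGraph (insert (a, b) E) := by
          apply fromEdgeSet_mono
          apply Set.image_mono
          exact_mod_cast Finset.subset_insert _ _
        have hadjab : (pairGraph (insert (a, b) E)).Adj a b := by
          rw [pairGraph, fromEdgeSet_adj]
          exact ⟨⟨(a, b), by simp, rfl⟩, hanb⟩
        have hAr : ∀ x ∈ A, ∀ y ∈ A, (pairGraph (insert (a, b) E)).Reachable x y :=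
          fun x hx y hy => (hE3 A hA x hx y hy).mono hmono
        have hBr : ∀ x ∈ B, ∀ y ∈ B, (pairGraph (insert (a, b) E)).Reachable x y :=
          fun x hx y hy => (hE3 B hB x hx y hy).mono hmono
        rintro D (rfl | hD) x hx y hy
        · rcases hx with hx | hx <;> rcases hy with hy | hy
          · exact hAr x hx y hy
          · exact ((hAr x hx a ha).trans hadjab.reachable).trans (hBr b hb y hy)
          · exact ((hBr x hx b hb).trans hadjab.symm.reachable).trans (hAr a ha y hy)
          · exact hBr x hx y hy
        · exact (hE3 D hD.1 x hx y hy).mono hmono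

lemma sum_dominate {α : Type*} [DecidableEq α] (w : α → ℝ) (M R S : Finset α)
    (hS : S ⊆ M ∪ R) (hcard : S.card = R.card)
    (hMR : ∀ m ∈ M, ∀ r ∈ R, w m ≤ w r) :
    ∑ p ∈ S, w p ≤ ∑ r ∈ R, w r := by
  rw [← Finset.sum_inter_add_sum_sdiff S R w, ← Finset.sum_inter_add_sum_sdiff R S w,
    Finset.inter_comm R S]
  refine add_le_add le_rfl ?_
  have hc : (S \ R).card = (R \ S).card := by
    have h1 := Finset.card_inter_add_card_sdiff S R
    have h2 := Finset.card_inter_add_card_sdiff R S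
    rw [Finset.inter_comm R S] at h2
    omega
  let e := Finset.equivOfCardEq hc
  rw [← Finset.sum_coe_sort (S \ R) w, ← Finset.sum_coe_sort (R \ S) w,
    ← Equiv.sum_comp e (fun y : {x // x ∈ R \ S} => w y.1)]
  apply Finset.sum_le_sum
  intro x _
  have hxS := (Finset.mem_sdiff.mp x.2).1
  have hxnR := (Finset.mem_sdiff.mp x.2).2
  have hxM : (x : α) ∈ M := by
    rcases Finset.mem_union.mp (hS hxS) with h | h
    · exact h
    · exact absurd h hxnR
  exact hMR _ hxM _ (Finset.mem_sdiff.mp (e x).2).1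

lemma treeCost_eq_sum {X : Type*} (dist : X → X → ℝ) (𝒞 : Set (Set X))
    (T : SimpleGraph {A : Set X // A ∈ 𝒞}) (hfin : T.edgeSet.Finite) :
    treeCost dist 𝒞 T = ∑ e ∈ hfin.toFinset, edgeWeight dist (Sym2.map Subtype.val e) := by
  rw [treeCost, ← finsum_mem_coe_finset (fun e => edgeWeight dist (Sym2.map Subtype.val e)) hfin.toFinset, Set.Finite.coe_toFinset]

end Aux

theorem singleLinkage_maximizes_MSTSp {X : Type*} [Fintype X] (dist : X → X → ℝ)
    (hsymm : ∀ x y : X, dist x y = dist y x)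
    (hpos : ∀ x y : X, x ≠ y → 0 < dist x y)
    (hdistinct : ∀ x y x' y' : X, x ≠ y → x' ≠ y' → dist x y = dist x' y' →
      (x = x' ∧ y = y') ∨ (x = y' ∧ y = x'))
    (k : ℕ) (hk : 2 ≤ k) (hkn : k ≤ Fintype.card X)
    (𝒞SL : Set (Set X)) (hSL : SingleLinkage dist (Fintype.card X - k) 𝒞SL)
    (𝒞 : Set (Set X)) (h𝒞 : IsClustering 𝒞) (h𝒞k : 𝒞.ncard = k) :
    MSTSp dist 𝒞 ≤ MSTSp dist 𝒞SL := by
  classical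
  obtain ⟨hne𝒞, hcover𝒞, hdisj𝒞⟩ := h𝒞
  have inv := singleLinkage_inv hSL
  have hfin𝒞 : 𝒞.Finite := Set.finite_of_ncard_ne_zero (by omega)
  have hfinSL : 𝒞SL.Finite := inv.fin
  have hcardSL : 𝒞SL.ncard = k := by have := inv.card; omega
  haveI fC : Fintype {A : Set X // A ∈ 𝒞} := hfin𝒞.fintype
  haveI fSL : Fintype {A : Set X // A ∈ 𝒞SL} := hfinSL.fintype
  have hcardC : Fintype.card {A : Set X // A ∈ 𝒞} = k := by
    rw [← Nat.card_eq_fintype_card, Nat.card_coe_set_eq, h𝒞k]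
  have hcardSL' : Fintype.card {A : Set X // A ∈ 𝒞SL} = k := by
    rw [← Nat.card_eq_fintype_card, Nat.card_coe_set_eq, hcardSL]
  haveI : Nonempty {A : Set X // A ∈ 𝒞SL} := by
    rw [← Fintype.card_pos_iff, hcardSL']; omega
  haveI : Nonempty {A : Set X // A ∈ 𝒞} := by
    rw [← Fintype.card_pos_iff, hcardC]; omega
  haveI : Nonempty X := by
    rw [← Fintype.card_pos_iff]; omega
  have hBdd : BddBelow {c : ℝ | ∃ T : SimpleGraph {A : Set X // A ∈ 𝒞},
      T.IsTree ∧ treeCost dist 𝒞 T = c} := by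
    refine ⟨0, ?_⟩
    rintro c ⟨T, hT, rfl⟩
    rw [treeCost_eq_sum dist 𝒞 T (T.edgeSet.toFinite)]
    apply Finset.sum_nonneg
    intro e he
    rw [Set.Finite.mem_toFinset] at he
    obtain ⟨C, D, hadj, rfl⟩ := exists_adj_of_mem_edgeSet he
    rw [Sym2.map_pair_eq]
    exact edgeWeight_nonneg dist hpos
      (hdisj𝒞 C.1 C.2 D.1 D.2 (fun h => hadj.ne (Subtype.ext h)))
  have hkey : ∀ T' : SimpleGraph {A : Set X // A ∈ 𝒞SL}, T'.IsTree →
      MSTSp dist 𝒞 ≤ treeCost dist 𝒞SL T' := by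
    intro T' hT'
    obtain ⟨M₀, hM1, hM2, hM3⟩ := inv.edges
    set EF' : Finset (Sym2 {A : Set X // A ∈ 𝒞SL}) := (T'.edgeSet.toFinite).toFinset with hEF'
    have hψex : ∀ e : Sym2 {A : Set X // A ∈ 𝒞SL}, ∃ p : X × X, e ∈ EF' →
        p.1 ≠ p.2 ∧ ∃ C D : {A : Set X // A ∈ 𝒞SL}, T'.Adj C D ∧ e = s(C, D) ∧
          p.1 ∈ C.1 ∧ p.2 ∈ D.1 ∧
          dist p.1 p.2 = edgeWeight dist (Sym2.map Subtype.val e) := by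
      intro e
      by_cases he : e ∈ EF'
      · rw [hEF', Set.Finite.mem_toFinset] at he
        obtain ⟨C, D, hadj, rfl⟩ := exists_adj_of_mem_edgeSet he
        obtain ⟨x, hx, y, hy, hxy⟩ := spacing_attained dist (inv.nonempty C.1 C.2)
          (inv.nonempty D.1 D.2)
        refine ⟨(x, y), fun _ => ⟨?_, C, D, hadj, rfl, hx, hy, ?_⟩⟩
        · intro h
          have hxy' : x = y := h
          rw [hxy'] at hx
          exact Set.disjoint_left.mp (inv.disj C.1 C.2 D.1 D.2
            (fun h' => hadj.ne (Subtype.ext h'))) hx hy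
        · rw [Sym2.map_pair_eq, edgeWeight_eq_spacing dist hsymm]
          exact hxy.symm
      · exact ⟨(Classical.arbitrary X, Classical.arbitrary X), fun h => absurd h he⟩
    choose ψ hψ using hψex
    have hMle : ∀ m ∈ M₀, ∀ e ∈ EF', dist m.1 m.2 ≤ dist (ψ e).1 (ψ e).2 := by
      intro m hm e he
      obtain ⟨hne', C, D, hadj, hes, hc1, hc2, hwe⟩ := hψ e he
      refine hM2 m hm _ _ ?_
      rintro D₀ hD₀ ⟨hx, hy⟩
      have e1 : D₀ = C.1 := part_unique inv.disj hD₀ C.2 hx hc1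
      have e2 : D₀ = D.1 := part_unique inv.disj hD₀ D.2 hy hc2
      exact hadj.ne (Subtype.ext (e1.symm.trans e2))
    set goodF : Finset (X × X) := M₀ ∪ EF'.image ψ with hgoodF
    have hMsub : pairGraph M₀ ≤ pairGraph goodF := by
      apply SimpleGraph.fromEdgeSet_mono
      apply Set.image_mono
      rw [hgoodF]
      exact_mod_cast Finset.subset_union_left
    have hreachSL : ∀ D ∈ 𝒞SL, ∀ x ∈ D, ∀ y ∈ D, (pairGraph goodF).Reachable x y :=
      fun D hD x hx y hy => (hM3 D hD x hx y hy).mono hMsub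
    have hψgood : ∀ e ∈ EF', (pairGraph goodF).Adj (ψ e).1 (ψ e).2 := by
      intro e he
      rw [pairGraph, SimpleGraph.fromEdgeSet_adj]
      refine ⟨⟨ψ e, ?_, rfl⟩, (hψ e he).1⟩
      rw [hgoodF]
      exact_mod_cast Finset.mem_union_right _ (Finset.mem_image_of_mem ψ he)
    have hwalk : ∀ (C D : {A : Set X // A ∈ 𝒞SL}) (W : T'.Walk C D),
        ∀ p ∈ C.1, ∀ q ∈ D.1, (pairGraph goodF).Reachable p q := by
      intro C D W
      induction W with
      | nil =>
        exact fun p hp q hq => hreachSL _ (Subtype.coe_prop _) p hp q hq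
      | @cons u v z hadj W ih =>
        intro p hp q hq
        have he : s(u, v) ∈ EF' := by
          rw [hEF', Set.Finite.mem_toFinset]
          exact hadj
        obtain ⟨hne', C', D', hadj', hes, hc1, hc2, -⟩ := hψ _ he
        have hptadj := hψgood _ he
        rcases Sym2.eq_iff.mp hes with ⟨h3, h4⟩ | ⟨h3, h4⟩
        · subst h3; subst h4
          exact ((hreachSL _ (Subtype.coe_prop _) p hp _ hc1).trans
            hptadj.reachable).trans (ih _ hc2 q hq)
        · subst h3; subst h4
          exact ((hreachSL _ (Subtype.coe_prop _) p hp _ hc2).trans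
            hptadj.symm.reachable).trans (ih _ hc1 q hq)
    let Gcl : SimpleGraph {A : Set X // A ∈ 𝒞} :=
      { Adj := fun C D => C ≠ D ∧ ∃ p ∈ goodF,
          (p.1 ∈ C.1 ∧ p.2 ∈ D.1) ∨ (p.1 ∈ D.1 ∧ p.2 ∈ C.1),
        symm := ⟨by
          rintro C D ⟨hne', p, hp, hcr⟩
          exact ⟨hne'.symm, p, hp, hcr.symm⟩⟩,
        loopless := ⟨fun C h => h.1 rfl⟩ }
    have hcl : ∀ x : X, ∃ C : {A : Set X // A ∈ 𝒞}, x ∈ C.1 := by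
      intro x
      have hx : x ∈ ⋃₀ 𝒞 := by rw [hcover𝒞]; trivial
      obtain ⟨A, hA, hxA⟩ := hx
      exact ⟨⟨A, hA⟩, hxA⟩
    have hclSL : ∀ x : X, ∃ C : {A : Set X // A ∈ 𝒞SL}, x ∈ C.1 := by
      intro x
      have hx : x ∈ ⋃₀ 𝒞SL := by rw [inv.cover]; trivial
      obtain ⟨A, hA, hxA⟩ := hx
      exact ⟨⟨A, hA⟩, hxA⟩
    have hproj : ∀ (p q : X) (W : (pairGraph goodF).Walk p q)
        (C D : {A : Set X // A ∈ 𝒞}), p ∈ C.1 → q ∈ D.1 → Gcl.Reachable C D := by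
      intro p q W
      induction W with
      | nil =>
        intro C D h1 h2
        have hCD : C = D := Subtype.ext (part_unique hdisj𝒞 C.2 D.2 h1 h2)
        rw [hCD]
      | @cons x a z hadj W ih =>
        intro C D h1 h2
        obtain ⟨Ca, hCa⟩ := hcl a
        refine SimpleGraph.Reachable.trans ?_ (ih Ca D hCa h2)
        by_cases hCC : C = Ca
        · rw [hCC]
        · refine SimpleGraph.Adj.reachable ?_
          rw [pairGraph, SimpleGraph.fromEdgeSet_adj] at hadj
          obtain ⟨⟨g, hg, hge⟩, hnepa⟩ := hadj
          rcases Sym2.eq_iff.mp hge with ⟨hg1, hg2⟩ | ⟨hg1, hg2⟩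
          · exact ⟨hCC, g, Finset.mem_coe.mp hg,
              Or.inl ⟨by rw [hg1]; exact h1, by rw [hg2]; exact hCa⟩⟩
          · exact ⟨hCC, g, Finset.mem_coe.mp hg,
              Or.inr ⟨by rw [hg1]; exact hCa, by rw [hg2]; exact h1⟩⟩
    have hGclconn : Gcl.Connected := by
      rw [SimpleGraph.connected_iff]
      refine ⟨?_, inferInstance⟩
      intro C D
      obtain ⟨p, hp⟩ := hne𝒞 C.1 C.2
      obtain ⟨q, hq⟩ := hne𝒞 D.1 D.2
      obtain ⟨Cp, hCp⟩ := hclSL p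
      obtain ⟨Cq, hCq⟩ := hclSL q
      obtain ⟨W'⟩ := hT'.isConnected.preconnected Cp Cq
      obtain ⟨Wpt⟩ := hwalk Cp Cq W' p hCp q hCq
      exact hproj p q Wpt C D hp hq
    obtain ⟨T, hTle, hTtree⟩ := exists_spanning_tree Gcl hGclconn
    have h1 : MSTSp dist 𝒞 ≤ treeCost dist 𝒞 T := csInf_le hBdd ⟨T, hTtree, rfl⟩
    set EF : Finset (Sym2 {A : Set X // A ∈ 𝒞}) := (T.edgeSet.toFinite).toFinset with hEF
    have hφex : ∀ e : Sym2 {A : Set X // A ∈ 𝒞}, ∃ p : X × X, e ∈ EF →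
        p ∈ goodF ∧ ∃ C D : {A : Set X // A ∈ 𝒞}, T.Adj C D ∧ e = s(C, D) ∧
          ((p.1 ∈ C.1 ∧ p.2 ∈ D.1) ∨ (p.1 ∈ D.1 ∧ p.2 ∈ C.1)) := by
      intro e
      by_cases he : e ∈ EF
      · rw [hEF, Set.Finite.mem_toFinset] at he
        obtain ⟨C, D, hadj, rfl⟩ := exists_adj_of_mem_edgeSet he
        have hGadj : Gcl.Adj C D := hTle hadj
        obtain ⟨hne', p, hp, hcr⟩ := hGadj
        exact ⟨p, fun _ => ⟨hp, C, D, hadj, rfl, hcr⟩⟩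
      · exact ⟨(Classical.arbitrary X, Classical.arbitrary X), fun h => absurd h he⟩
    choose φ hφ using hφex
    have h2 : treeCost dist 𝒞 T ≤ ∑ e ∈ EF, dist (φ e).1 (φ e).2 := by
      rw [treeCost_eq_sum dist 𝒞 T (T.edgeSet.toFinite)]
      apply Finset.sum_le_sum
      intro e he
      obtain ⟨hg, C, D, hadj, rfl, hcr⟩ := hφ e he
      rw [Sym2.map_pair_eq, edgeWeight_eq_spacing dist hsymm]
      rcases hcr with ⟨ha, hb⟩ | ⟨ha, hb⟩
      · exact spacing_le dist ha hb
      · rw [hsymm]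
        exact spacing_le dist hb ha
    have hφinj : ∀ e ∈ EF, ∀ e' ∈ EF, φ e = φ e' → e = e' := by
      intro e he e' he' heq
      obtain ⟨-, C, D, hadj, rfl, hcr⟩ := hφ e he
      obtain ⟨-, C', D', hadj', rfl, hcr'⟩ := hφ e' he'
      rw [heq] at hcr
      have key : ∀ (U W U' W' : {A : Set X // A ∈ 𝒞}) (z : X × X),
          z.1 ∈ U.1 → z.2 ∈ W.1 → z.1 ∈ U'.1 → z.2 ∈ W'.1 → s(U, W) = s(U', W') := by
        intro U W U' W' z hz1 hz2 hz1' hz2'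
        rw [Subtype.ext (part_unique hdisj𝒞 U.2 U'.2 hz1 hz1'),
          Subtype.ext (part_unique hdisj𝒞 W.2 W'.2 hz2 hz2')]
      rcases hcr with ⟨ha, hb⟩ | ⟨ha, hb⟩ <;> rcases hcr' with ⟨ha', hb'⟩ | ⟨ha', hb'⟩
      · exact key C D C' D' _ ha hb ha' hb'
      · exact (key C D D' C' _ ha hb ha' hb').trans Sym2.eq_swap
      · exact Sym2.eq_swap.symm.trans (key D C C' D' _ ha hb ha' hb')
      · exact Sym2.eq_swap.symm.trans ((key D C D' C' _ ha hb ha' hb').trans Sym2.eq_swap)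
    have hψinj : ∀ e ∈ EF', ∀ e' ∈ EF', ψ e = ψ e' → e = e' := by
      intro e he e' he' heq
      obtain ⟨-, C, D, hadj, rfl, hc1, hc2, -⟩ := hψ e he
      obtain ⟨-, C', D', hadj', rfl, hc1', hc2', -⟩ := hψ e' he'
      rw [heq] at hc1 hc2
      rw [Subtype.ext (part_unique inv.disj C.2 C'.2 hc1 hc1'),
        Subtype.ext (part_unique inv.disj D.2 D'.2 hc2 hc2')]
    have h3 : ∑ e ∈ EF, dist (φ e).1 (φ e).2 = ∑ p ∈ EF.image φ, dist p.1 p.2 :=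
      (Finset.sum_image (f := fun p : X × X => dist p.1 p.2) hφinj).symm
    have hEFeq : EF = T.edgeFinset := by
      apply Finset.coe_injective
      rw [Set.Finite.coe_toFinset, SimpleGraph.coe_edgeFinset]
    have hEF'eq : EF' = T'.edgeFinset := by
      apply Finset.coe_injective
      rw [Set.Finite.coe_toFinset, SimpleGraph.coe_edgeFinset]
    have hEFcard : EF.card + 1 = k := by
      rw [hEFeq]
      rw [← hcardC]
      exact hTtree.card_edgeFinset
    have hEF'card : EF'.card + 1 = k := by
      rw [hEF'eq]
      rw [← hcardSL']
      exact hT'.card_edgeFinset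
    have hScard : (EF.image φ).card = EF.card :=
      Finset.card_image_of_injOn (fun x hx y hy => hφinj x (Finset.mem_coe.mp hx) y
        (Finset.mem_coe.mp hy))
    have hRcard : (EF'.image ψ).card = EF'.card :=
      Finset.card_image_of_injOn (fun x hx y hy => hψinj x (Finset.mem_coe.mp hx) y
        (Finset.mem_coe.mp hy))
    have h4 : ∑ p ∈ EF.image φ, dist p.1 p.2 ≤ ∑ r ∈ EF'.image ψ, dist r.1 r.2 := by
      apply sum_dominate (fun p : X × X => dist p.1 p.2) M₀ (EF'.image ψ) (EF.image φ)
      · intro p hp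
        obtain ⟨e, he, rfl⟩ := Finset.mem_image.mp hp
        have := (hφ e he).1
        rw [hgoodF] at this
        exact this
      · rw [hScard, hRcard]; omega
      · intro m hm r hr
        obtain ⟨e, he, rfl⟩ := Finset.mem_image.mp hr
        exact hMle m hm e he
    have h5 : ∑ r ∈ EF'.image ψ, dist r.1 r.2 = treeCost dist 𝒞SL T' := by
      rw [Finset.sum_image hψinj, treeCost_eq_sum dist 𝒞SL T' (T'.edgeSet.toFinite)]
      refine Finset.sum_congr rfl (fun e he => ?_)
      obtain ⟨-, C, D, -, -, -, -, hwe⟩ := hψ e he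
      exact hwe
    calc MSTSp dist 𝒞 ≤ treeCost dist 𝒞 T := h1
    _ ≤ ∑ e ∈ EF, dist (φ e).1 (φ e).2 := h2
    _ = ∑ p ∈ EF.image φ, dist p.1 p.2 := h3
    _ ≤ ∑ r ∈ EF'.image ψ, dist r.1 r.2 := h4
    _ = treeCost dist 𝒞SL T' := h5
  have hne : {c : ℝ | ∃ T : SimpleGraph {A : Set X // A ∈ 𝒞SL},
      T.IsTree ∧ treeCost dist 𝒞SL T = c}.Nonempty := by
    obtain ⟨T, -, hTt⟩ := exists_spanning_tree (⊤ : SimpleGraph {A : Set X // A ∈ 𝒞SL})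
      SimpleGraph.connected_top
    exact ⟨_, ⟨T, hTt, rfl⟩⟩
  exact le_csInf hne (by rintro c ⟨T', hT', rfl⟩; exact hkey T' hT')

end ClusterSpacing
end

section
/- Let X be a finite set of n points, let k and L be positive integers with k ≥ 2 and n ≥ kL, let 0 < ε < 1, and set ρ = min{n/(kL), 2}. Let A' be a partition of X into ℓ groups, with 1 ≤ ℓ ≤ k, each containing at least (1−ε)L points. Then there exists a partition B of X into exactly k groups, each containing at least ⌊ρ(1−ε)L/2⌋ points, such that every group of B is contained in some group of A'. -/
open scoped Classical

namespace ClusterSpacing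

variable {X : Type*}

/-- Split a finite set into `j` parts, each of size at least `m'`. -/
private lemma split_lemma {α : Type*} (m' : ℕ) (hm' : 1 ≤ m') :
    ∀ (j : ℕ) (S : Set α), S.Finite → 1 ≤ j → j * m' ≤ S.ncard →
    ∃ P : Set (Set α), P.Finite ∧ P.ncard = j ∧ ⋃₀ P = S ∧
      (∀ B ∈ P, m' ≤ B.ncard) ∧ (∀ B ∈ P, B ⊆ S) ∧
      ∀ B ∈ P, ∀ B' ∈ P, B ≠ B' → Disjoint B B' := by
  intro j
  induction j with
  | zero => intro S _ h; omega
  | succ j ih =>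
    intro S hS _ hcard
    rcases Nat.eq_zero_or_pos j with rfl | hj
    · refine ⟨{S}, Set.finite_singleton _, Set.ncard_singleton _, Set.sUnion_singleton _,
        ?_, ?_, ?_⟩
      · intro B hB; rw [Set.mem_singleton_iff] at hB; subst hB
        simpa using hcard
      · intro B hB; rw [Set.mem_singleton_iff] at hB; subst hB; rfl
      · intro B hB B' hB' hne
        rw [Set.mem_singleton_iff] at hB hB'; subst hB; subst hB'; exact absurd rfl hne
    · have hm'S : m' ≤ S.ncard := le_trans (by nlinarith) hcard
      obtain ⟨T, hTS, hTcard⟩ := Set.exists_subset_card_eq hm'S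
      have hTfin : T.Finite := hS.subset hTS
      have hTne : T.Nonempty := Set.nonempty_of_ncard_ne_zero (by omega)
      have hdiffcard : (S \ T).ncard = S.ncard - m' := by
        rw [Set.ncard_diff hTS hTfin, hTcard]
      have hrec : j * m' ≤ (S \ T).ncard := by
        rw [hdiffcard]
        have : (j + 1) * m' = j * m' + m' := by ring
        omega
      obtain ⟨P', hP'fin, hP'c, hP'u, hP'sz, hP'sub, hP'disj⟩ :=
        ih (S \ T) hS.diff hj hrec
      have hTnotmem : T ∉ P' := by
        intro hT
        obtain ⟨x, hx⟩ := hTne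
        exact (hP'sub T hT hx).2 hx
      refine ⟨insert T P', hP'fin.insert _, ?_, ?_, ?_, ?_, ?_⟩
      · rw [Set.ncard_insert_of_notMem hTnotmem hP'fin, hP'c]
      · rw [Set.sUnion_insert, hP'u, Set.union_diff_cancel hTS]
      · intro B hB
        rcases Set.mem_insert_iff.mp hB with rfl | hB
        · omega
        · exact hP'sz B hB
      · intro B hB
        rcases Set.mem_insert_iff.mp hB with rfl | hB
        · exact hTS
        · exact (hP'sub B hB).trans Set.diff_subset
      · intro B hB B' hB' hne
        rcases Set.mem_insert_iff.mp hB with hB1 | hB1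
        · rcases Set.mem_insert_iff.mp hB' with hB2 | hB2
          · exact absurd (hB1.trans hB2.symm) hne
          · rw [hB1]
            exact Set.disjoint_of_subset_right (hP'sub _ hB2) Set.disjoint_sdiff_right
        · rcases Set.mem_insert_iff.mp hB' with hB2 | hB2
          · rw [hB2]
            exact Set.disjoint_of_subset_left (hP'sub _ hB1) Set.disjoint_sdiff_left
          · exact hP'disj B hB1 B' hB2 hne

/-- Allocation lemma: distribute `k` among elements of `s`, at least 1 and at most `f i` each. -/
private lemma alloc_lemma {ι : Type*} [DecidableEq ι] (s : Finset ι) (f : ι → ℕ) :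
    ∀ k : ℕ, (∀ i ∈ s, 1 ≤ f i) → s.card ≤ k → k ≤ ∑ i ∈ s, f i →
    ∃ g : ι → ℕ, (∀ i ∈ s, 1 ≤ g i ∧ g i ≤ f i) ∧ ∑ i ∈ s, g i = k := by
  induction s using Finset.induction_on with
  | empty =>
    intro k _ h1 h2
    simp only [Finset.card_empty, Finset.sum_empty] at *
    exact ⟨fun _ => 0, by simp, by omega⟩
  | insert _ _ ha ih =>
    rename_i a t
    intro k hf hk1 hk2
    rw [Finset.card_insert_of_notMem ha] at hk1
    rw [Finset.sum_insert ha] at hk2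
    have hfa : 1 ≤ f a := hf a (Finset.mem_insert_self a t)
    have htsum : t.card ≤ ∑ i ∈ t, f i := by
      calc t.card = ∑ _i ∈ t, 1 := by simp
        _ ≤ ∑ i ∈ t, f i := Finset.sum_le_sum fun i hi => hf i (Finset.mem_insert_of_mem hi)
    obtain ⟨q, hqle1, hqle2, hqkey⟩ : ∃ q : ℕ, q ≤ f a ∧ q ≤ k - t.card ∧
        (q = f a ∨ q = k - t.card) := by
      rcases le_total (f a) (k - t.card) with h | h
      · exact ⟨f a, le_refl _, h, Or.inl rfl⟩
      · exact ⟨k - t.card, h, le_refl _, Or.inr rfl⟩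
    have hq1 : 1 ≤ q := by omega
    have hcase : k - q ≤ ∑ i ∈ t, f i := by
      rcases hqkey with h | h <;> omega
    obtain ⟨g', hg'1, hg'2⟩ := ih (k - q) (fun i hi => hf i (Finset.mem_insert_of_mem hi))
      (by omega) hcase
    refine ⟨fun i => if i = a then q else g' i, ?_, ?_⟩
    · intro i hi
      rcases Finset.mem_insert.mp hi with h1 | h1
      · subst h1; simpa using And.intro hq1 hqle1
      · have hne : i ≠ a := fun h => ha (h ▸ h1)
        simpa [hne] using And.intro (hg'1 i h1).1 (hg'1 i h1).2
    · rw [Finset.sum_insert ha]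
      have hqa : (if a = a then q else g' a) = q := if_pos rfl
      rw [hqa]
      have : ∑ i ∈ t, (if i = a then q else g' i) = ∑ i ∈ t, g' i := by
        apply Finset.sum_congr rfl
        intro i hi
        have hne : i ≠ a := fun h => ha (h ▸ hi)
        simp [hne]
      rw [this, hg'2]
      omega

/-- Cardinality of a disjoint union over a finset. -/
private lemma ncard_biUnion_eq {ι α : Type*} (s : Finset ι) (F : ι → Set α) :
    (∀ i ∈ s, (F i).Finite) →
    (∀ i ∈ s, ∀ j ∈ s, i ≠ j → Disjoint (F i) (F j)) →
    (⋃ i ∈ s, F i).ncard = ∑ i ∈ s, (F i).ncard := by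
  classical
  induction s using Finset.induction_on with
  | empty => simp
  | insert _ _ ha ih =>
    rename_i a t
    intro hfin hdisj
    rw [Finset.set_biUnion_insert, Finset.sum_insert ha]
    have hfint : (⋃ i ∈ t, F i).Finite :=
      Set.Finite.biUnion t.finite_toSet (fun i hi => hfin i (Finset.mem_insert_of_mem hi))
    rw [Set.ncard_union_eq ?_ (hfin a (Finset.mem_insert_self a t)) hfint]
    · rw [ih (fun i hi => hfin i (Finset.mem_insert_of_mem hi))
        (fun i hi j hj hij => hdisj i (Finset.mem_insert_of_mem hi) j
          (Finset.mem_insert_of_mem hj) hij)]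
    · simp only [Set.disjoint_iUnion_right]
      intro i hi
      exact hdisj a (Finset.mem_insert_self a t) i (Finset.mem_insert_of_mem hi)
        (fun h => ha (h ▸ hi))

theorem exists_balanced_refinement {X : Type*} [Fintype X]
    (k L : ℕ) (hk : 2 ≤ k) (hL : 1 ≤ L) (hn : k * L ≤ Fintype.card X)
    (ε : ℝ) (hε0 : 0 < ε) (hε1 : ε < 1)
    (ρ : ℝ) (hρ : ρ = min ((Fintype.card X : ℝ) / (k * L)) 2)
    (ℓ : ℕ) (hℓ1 : 1 ≤ ℓ) (hℓk : ℓ ≤ k)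
    (𝒜 : Set (Set X)) (h𝒜 : IsClustering 𝒜) (h𝒜c : 𝒜.ncard = ℓ)
    (h𝒜L : ∀ A ∈ 𝒜, (1 - ε) * L ≤ (A.ncard : ℝ)) :
    ∃ ℬ : Set (Set X), IsClustering ℬ ∧ ℬ.ncard = k ∧
      (∀ B ∈ ℬ, ⌊ρ * (1 - ε) * L / 2⌋₊ ≤ B.ncard) ∧
      (∀ B ∈ ℬ, ∃ A ∈ 𝒜, B ⊆ A) := by
  classical
  obtain ⟨h𝒜ne, h𝒜u, h𝒜d⟩ := h𝒜
  have h𝒜fin : 𝒜.Finite := Set.toFinite _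
  set 𝒜f := h𝒜fin.toFinset with h𝒜f_def
  have hmem : ∀ A : Set X, A ∈ 𝒜f ↔ A ∈ 𝒜 := fun A => Set.Finite.mem_toFinset _
  have hn2 : 2 ≤ Fintype.card X := by
    calc 2 = 2 * 1 := rfl
      _ ≤ k * L := Nat.mul_le_mul hk hL
      _ ≤ _ := hn
  have hk0 : (0:ℝ) < k := by exact_mod_cast Nat.lt_of_lt_of_le two_pos hk
  have hL0 : (0:ℝ) < L := by exact_mod_cast Nat.lt_of_lt_of_le one_pos hL
  have hncard0 : (0:ℝ) < (Fintype.card X : ℝ) := by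
    have : 0 < Fintype.card X := by omega
    exact_mod_cast this
  have hρ0 : 0 ≤ ρ := by
    rw [hρ]
    refine le_min (div_nonneg (Nat.cast_nonneg _) ?_) (by norm_num)
    positivity
  have hρ2 : ρ ≤ 2 := by rw [hρ]; exact min_le_right _ _
  have hρn : ρ ≤ (Fintype.card X : ℝ) / (k * L) := by rw [hρ]; exact min_le_left _ _
  have hρkl : ρ * ((k:ℝ) * L) ≤ (Fintype.card X : ℝ) :=
    (le_div_iff₀ (mul_pos hk0 hL0)).mp hρn
  have hε' : (0:ℝ) ≤ 1 - ε := by linarith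
  set m := ⌊ρ * (1 - ε) * L / 2⌋₊ with hm_def
  set m' := max m 1 with hm'_def
  have hm'1 : 1 ≤ m' := le_max_right _ _
  have hfloor : (m:ℝ) ≤ ρ * (1 - ε) * L / 2 :=
    Nat.floor_le (div_nonneg (mul_nonneg (mul_nonneg hρ0 hε') (Nat.cast_nonneg L)) (by norm_num))
  have hm1L : (m:ℝ) ≤ (1 - ε) * L := by
    have h2 : ρ * ((1-ε) * L) ≤ 2 * ((1-ε) * L) :=
      mul_le_mul_of_nonneg_right hρ2 (mul_nonneg hε' (Nat.cast_nonneg L))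
    linarith
  have hAcard : ∀ A ∈ 𝒜, m' ≤ A.ncard := by
    intro A hA
    have h1 : 0 < A.ncard := (Set.ncard_pos (Set.toFinite A)).mpr (h𝒜ne A hA)
    have h2 : (m:ℝ) ≤ (A.ncard:ℝ) := le_trans hm1L (h𝒜L A hA)
    have h2' : m ≤ A.ncard := by exact_mod_cast h2
    omega
  have hsum : ∑ A ∈ 𝒜f, A.ncard = Fintype.card X := by
    have hd : ∀ A ∈ 𝒜f, ∀ B ∈ 𝒜f, A ≠ B → Disjoint A B := fun A hA B hB =>
      h𝒜d A ((hmem A).mp hA) B ((hmem B).mp hB)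
    have huniv : (⋃ A ∈ 𝒜f, id A) = Set.univ := by
      rw [← h𝒜u]
      ext x
      simp only [Set.mem_iUnion, Set.mem_sUnion, id, hmem]
      tauto
    have h1 := ncard_biUnion_eq 𝒜f id (fun A _ => Set.toFinite A) hd
    simp only [id_eq] at h1 huniv
    rw [huniv, Set.ncard_univ, Nat.card_eq_fintype_card] at h1
    exact h1.symm
  have hcardf : 𝒜f.card = ℓ := by
    rw [← h𝒜c]; exact (Set.ncard_eq_toFinset_card _ h𝒜fin).symm
  have hone : ∀ A ∈ 𝒜f, 1 ≤ A.ncard / m' := by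
    intro A hA
    exact (Nat.one_le_div_iff (by omega)).mpr (hAcard A ((hmem A).mp hA))
  have hsumdiv : k ≤ ∑ A ∈ 𝒜f, A.ncard / m' := by
    by_cases hm0 : m = 0
    · have hm'one : m' = 1 := by omega
      simp only [hm'one, Nat.div_one]
      rw [hsum]
      calc k = k * 1 := (mul_one k).symm
        _ ≤ k * L := Nat.mul_le_mul_left k hL
        _ ≤ _ := hn
    · have hm'm : m' = m := by omega
      have hlt1 : ∀ A ∈ 𝒜f, A.ncard < 2 * m * (A.ncard / m') := by
        intro A hA
        have h1 : 1 ≤ A.ncard / m' := hone A hA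
        have h2 := Nat.div_add_mod A.ncard m'
        have h3 : A.ncard % m' < m' := Nat.mod_lt _ (by omega)
        set qq := A.ncard / m' with hqq
        have h4 : m' * (qq + 1) ≤ m' * (2 * qq) := Nat.mul_le_mul_left _ (by omega)
        have h5 : m' * (qq + 1) = m' * qq + m' := by ring
        calc A.ncard < m' * (qq + 1) := by omega
          _ ≤ m' * (2 * qq) := h4
          _ = 2 * m * qq := by rw [hm'm]; ring
      have h𝒜fne : 𝒜f.Nonempty := by
        rw [← Finset.card_pos, hcardf]; omega
      have hstrict : Fintype.card X < 2 * m * ∑ A ∈ 𝒜f, A.ncard / m' := by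
        rw [← hsum, Finset.mul_sum]
        exact Finset.sum_lt_sum_of_nonempty h𝒜fne hlt1
      have hreal : (2 * m * k : ℝ) < (Fintype.card X : ℝ) := by
        have e1 : (m:ℝ) * k ≤ (ρ * (1 - ε) * L / 2) * k :=
          mul_le_mul_of_nonneg_right hfloor hk0.le
        have e2 : (ρ * ((k:ℝ) * L)) * (1 - ε) ≤ (Fintype.card X : ℝ) * (1 - ε) :=
          mul_le_mul_of_nonneg_right hρkl hε'
        nlinarith [mul_pos hncard0 hε0]
      have hnat : 2 * m * k < Fintype.card X := by exact_mod_cast hreal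
      by_contra hcon
      push_neg at hcon
      have hle : 2 * m * ∑ A ∈ 𝒜f, A.ncard / m' ≤ 2 * m * k :=
        Nat.mul_le_mul_left _ (by omega)
      omega
  obtain ⟨g, hg1, hg2⟩ := alloc_lemma 𝒜f (fun A => A.ncard / m') k hone
    (by rw [hcardf]; exact hℓk) hsumdiv
  have hPart : ∀ A ∈ 𝒜, ∃ P : Set (Set X), P.Finite ∧ P.ncard = g A ∧ ⋃₀ P = A ∧
      (∀ B ∈ P, m' ≤ B.ncard) ∧ (∀ B ∈ P, B ⊆ A) ∧
      ∀ B ∈ P, ∀ B' ∈ P, B ≠ B' → Disjoint B B' := by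
    intro A hA
    have hA' : A ∈ 𝒜f := (hmem A).mpr hA
    refine split_lemma m' hm'1 (g A) A (Set.toFinite A) (hg1 A hA').1 ?_
    calc g A * m' ≤ (A.ncard / m') * m' := Nat.mul_le_mul_right _ (hg1 A hA').2
      _ ≤ A.ncard := Nat.div_mul_le_self _ _
  choose! P hPfin hPc hPu hPsz hPsub hPdisj using hPart
  have hBne : ∀ A ∈ 𝒜, ∀ B ∈ P A, B.Nonempty := by
    intro A hA B hB
    have := hPsz A hA B hB
    exact Set.nonempty_of_ncard_ne_zero (by omega)
  refine ⟨⋃ A ∈ 𝒜, P A, ⟨?_, ?_, ?_⟩, ?_, ?_, ?_⟩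
  · intro B hB
    obtain ⟨A, hA, hBP⟩ := Set.mem_iUnion₂.mp hB
    exact hBne A hA B hBP
  · apply Set.eq_univ_of_forall
    intro x
    have hx : x ∈ ⋃₀ 𝒜 := by rw [h𝒜u]; trivial
    obtain ⟨A, hA, hxA⟩ := hx
    have : x ∈ ⋃₀ P A := by rw [hPu A hA]; exact hxA
    obtain ⟨B, hBP, hxB⟩ := this
    exact Set.mem_sUnion.mpr ⟨B, Set.mem_iUnion₂.mpr ⟨A, hA, hBP⟩, hxB⟩
  · intro B hB B' hB' hne
    obtain ⟨A, hA, hBP⟩ := Set.mem_iUnion₂.mp hB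
    obtain ⟨A', hA', hB'P⟩ := Set.mem_iUnion₂.mp hB'
    by_cases hAA : A = A'
    · subst hAA
      exact hPdisj A hA B hBP B' hB'P hne
    · exact (h𝒜d A hA A' hA' hAA).mono (hPsub A hA B hBP) (hPsub A' hA' B' hB'P)
  · have hB_eq : (⋃ A ∈ 𝒜, P A) = ⋃ A ∈ 𝒜f, P A := by
      rw [← Finset.set_biUnion_coe, Set.Finite.coe_toFinset]
    rw [hB_eq, ncard_biUnion_eq 𝒜f P (fun A hA => hPfin A ((hmem A).mp hA)) ?_]
    · rw [Finset.sum_congr rfl (fun A hA => hPc A ((hmem A).mp hA))]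
      exact hg2
    · intro A hA A' hA' hAA
      rw [Set.disjoint_left]
      intro B hBP hBP'
      have hA𝒜 := (hmem A).mp hA
      have hA'𝒜 := (hmem A').mp hA'
      obtain ⟨x, hx⟩ := hBne A hA𝒜 B hBP
      exact Set.disjoint_left.mp (h𝒜d A hA𝒜 A' hA'𝒜 hAA)
        (hPsub A hA𝒜 B hBP hx) (hPsub A' hA'𝒜 B hBP' hx)
  · intro B hB
    obtain ⟨A, hA, hBP⟩ := Set.mem_iUnion₂.mp hB
    have := hPsz A hA B hBP
    omega
  · intro B hB
    obtain ⟨A, hA, hBP⟩ := Set.mem_iUnion₂.mp hB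
    exact ⟨A, hA, hPsub A hA B hBP⟩


end ClusterSpacing
end
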